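/- Let A₁₁, A₁₂, A₂₂ be Riccati data on a complex separable Hilbert space H with diag{A₁₁} − A₂₂ ≫ 0, and let (sₙ) be the successive approximations. Then the even subsequence s₀, s₂, s₄, … is monotonically increasing in the Loewner order (s₀ ≤ s₂ ≤ s₄ ≤ …) and has a strong operator limit: there exists a selfadjoint operator s̲ ∈ B(H) such that s_{2n}x → s̲x in H for every x ∈ H. -/

import Mathlib

open MeasureTheory ContinuousLinearMap Filter
open scoped ENNReal NNReal Topology

noncomputable section

/-- `ℓ²(H)`: the Hilbert space of square-summable sequences in `H`, indexed by `ℕ`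
(index `k : ℕ` corresponds to the `(k+1)`-st entry in the paper's `1`-based indexing). -/
abbrev l2 (H : Type*) [NormedAddCommGroup H] [InnerProductSpace ℂ H] : Type _ :=
  lp (fun _ : ℕ => H) 2

variable {H : Type*} [NormedAddCommGroup H] [InnerProductSpace ℂ H]

lemma memℓp_diag (q : H →L[ℂ] H) (ξ : l2 H) : Memℓp (fun k => q (ξ k)) 2 := by
  have h2 : (0:ℝ) < (2 : ℝ≥0∞).toReal := by norm_num
  apply memℓp_gen
  have hs : Summable (fun k => ‖q‖ ^ (2 : ℝ≥0∞).toReal * ‖ξ k‖ ^ (2 : ℝ≥0∞).toReal) :=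
    ((lp.memℓp ξ).summable h2).mul_left _
  refine Summable.of_nonneg_of_le (fun k => ?_) (fun k => ?_) hs
  · positivity
  · rw [← Real.mul_rpow (norm_nonneg _) (norm_nonneg _)]
    exact Real.rpow_le_rpow (norm_nonneg _) (q.le_opNorm _) (by norm_num)

/-- `diag{q}`: the bounded block-diagonal operator on `ℓ²(H)` acting componentwise,
`(diag{q} ξ)ₖ = q (ξₖ)`. -/
def diagOp (q : H →L[ℂ] H) : l2 H →L[ℂ] l2 H :=
  LinearMap.mkContinuous
    { toFun := fun ξ => ⟨fun k => q (ξ k), memℓp_diag q ξ⟩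
      map_add' := fun ξ η => by ext k; (simp [lp.coeFn_add]) <;> rfl
      map_smul' := fun c ξ => by ext k; simp [lp.coeFn_smul] }
    ‖q‖
    (by
      intro ξ
      have h2 : (0:ℝ) < (2 : ℝ≥0∞).toReal := by norm_num
      refine lp.norm_le_of_tsum_le h2 (by positivity) ?_
      have hξ : ‖ξ‖ ^ (2 : ℝ≥0∞).toReal = ∑' k, ‖ξ k‖ ^ (2 : ℝ≥0∞).toReal :=
        lp.norm_rpow_eq_tsum h2 ξ
      have hsum : Summable (fun k => ‖ξ k‖ ^ (2 : ℝ≥0∞).toReal) := (lp.memℓp ξ).summable h2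
      calc ∑' k, ‖(fun k => q (ξ k)) k‖ ^ (2 : ℝ≥0∞).toReal
          ≤ ∑' k, ‖q‖ ^ (2 : ℝ≥0∞).toReal * ‖ξ k‖ ^ (2 : ℝ≥0∞).toReal := by
            refine Summable.tsum_le_tsum (fun k => ?_) ?_ (hsum.mul_left _)
            · rw [← Real.mul_rpow (norm_nonneg _) (norm_nonneg _)]
              exact Real.rpow_le_rpow (norm_nonneg _) (q.le_opNorm _) (by norm_num)
            · refine Summable.of_nonneg_of_le (fun k => ?_) (fun k => ?_)
                (hsum.mul_left (‖q‖ ^ (2 : ℝ≥0∞).toReal))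
              · positivity
              · rw [← Real.mul_rpow (norm_nonneg _) (norm_nonneg _)]
                exact Real.rpow_le_rpow (norm_nonneg _) (q.le_opNorm _) (by norm_num)
        _ = (‖q‖ * ‖ξ‖) ^ (2 : ℝ≥0∞).toReal := by
            rw [tsum_mul_left, ← hξ, Real.mul_rpow (norm_nonneg _) (norm_nonneg _)])

@[simp] lemma diagOp_apply (q : H →L[ℂ] H) (ξ : l2 H) (k : ℕ) :
    (diagOp q ξ) k = q (ξ k) := rfl

/-- An operator is *strongly positive* (written `ρ ≫ 0` in the paper) if `δ • I ≤ ρ`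
(Loewner order) for some `δ > 0`.  A strongly positive operator is boundedly invertible. -/
def StronglyPositive {E : Type*} [NormedAddCommGroup E] [InnerProductSpace ℂ E]
    [CompleteSpace E] (ρ : E →L[ℂ] E) : Prop :=
  ∃ δ : ℝ, 0 < δ ∧ δ • (1 : E →L[ℂ] E) ≤ ρ

variable [CompleteSpace H]

/-- The Riccati map `ℱ(s) = A₁₁ + A₁₂ (diag{s} − A₂₂)⁻¹ A₁₂*`.  Here `Ring.inverse` is the
genuine inverse whenever `diag{s} − A₂₂` is boundedly invertible, which is guaranteed when
`diag{s} − A₂₂ ≫ 0`. -/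
def riccatiMap (A11 : H →L[ℂ] H) (A12 : l2 H →L[ℂ] H) (A22 : l2 H →L[ℂ] l2 H)
    (s : H →L[ℂ] H) : H →L[ℂ] H :=
  A11 + A12 ∘L Ring.inverse (diagOp s - A22) ∘L ContinuousLinearMap.adjoint A12

/-- The successive approximations `s₀ = A₁₁`, `s_{n+1} = ℱ(sₙ)`. -/
def riccatiSeq (A11 : H →L[ℂ] H) (A12 : l2 H →L[ℂ] H) (A22 : l2 H →L[ℂ] l2 H) :
    ℕ → (H →L[ℂ] H)
  | 0 => A11
  | n + 1 => riccatiMap A11 A12 A22 (riccatiSeq A11 A12 A22 n)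

end

section RiccatiAux

open ContinuousLinearMap Filter Topology

noncomputable section

local notation "⟪" x ", " y "⟫" => @inner ℂ _ _ x y

variable {E F : Type*} [NormedAddCommGroup E] [InnerProductSpace ℂ E] [CompleteSpace E]
  [NormedAddCommGroup F] [InnerProductSpace ℂ F] [CompleteSpace F]

lemma smul_one_nonneg' {δ : ℝ} (hδ : 0 ≤ δ) : (0 : E →L[ℂ] E) ≤ δ • 1 := by
  rw [ContinuousLinearMap.le_def, sub_zero]
  constructor
  · rw [← ContinuousLinearMap.isSelfAdjoint_iff_isSymmetric, RCLike.real_smul_eq_coe_smul (K := ℂ)]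
    exact IsSelfAdjoint.smul (by rw [isSelfAdjoint_iff, RCLike.star_def, RCLike.conj_ofReal])
      (IsSelfAdjoint.one _)
  · intro x
    rw [ContinuousLinearMap.reApplyInnerSelf_apply]
    have hx : (δ • (1 : E →L[ℂ] E)) x = (δ : ℂ) • x := by
      rw [ContinuousLinearMap.smul_apply, ContinuousLinearMap.one_apply,
        RCLike.real_smul_eq_coe_smul (K := ℂ)]
      norm_cast
    rw [hx, inner_smul_left]
    rw [show ((starRingEnd ℂ) (δ:ℂ)) = (δ:ℂ) from Complex.conj_ofReal δ, RCLike.re_to_complex, Complex.re_ofReal_mul]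
    exact mul_nonneg hδ (by exact_mod_cast inner_self_nonneg (𝕜 := ℂ) (x := x))

lemma isUnit_smul_one {δ : ℝ} (hδ : 0 < δ) : IsUnit (δ • (1 : E →L[ℂ] E)) := by
  refine isUnit_iff_exists.mpr ⟨δ⁻¹ • 1, ?_, ?_⟩ <;>
    · rw [smul_mul_smul_comm] <;> simp [mul_inv_cancel₀ hδ.ne', inv_mul_cancel₀ hδ.ne']

lemma StronglyPositive.isUnit' {ρ : E →L[ℂ] E} (h : ∃ δ : ℝ, 0 < δ ∧ δ • (1 : E →L[ℂ] E) ≤ ρ) :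
    IsUnit ρ := by
  obtain ⟨δ, hδ, hle⟩ := h
  exact CStarAlgebra.isUnit_of_le _ hle ((isUnit_smul_one hδ).isStrictlyPositive (smul_one_nonneg' hδ.le))

lemma StronglyPositive.nonneg' {ρ : E →L[ℂ] E} (h : ∃ δ : ℝ, 0 < δ ∧ δ • (1 : E →L[ℂ] E) ≤ ρ) :
    0 ≤ ρ := by
  obtain ⟨δ, hδ, hle⟩ := h
  exact (smul_one_nonneg' hδ.le).trans hle

lemma ringInverse_nonneg {ρ : E →L[ℂ] E} (hu : IsUnit ρ) (hρ : 0 ≤ ρ) : 0 ≤ Ring.inverse ρ := by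
  rw [← hu.unit_spec, Ring.inverse_unit]
  exact CFC.inv_nonneg_of_nonneg hu.unit (by rwa [hu.unit_spec])

lemma ringInverse_antitone {ρ σ : E →L[ℂ] E} (hρ : 0 ≤ ρ) (hu : IsUnit ρ) (h : ρ ≤ σ) :
    Ring.inverse σ ≤ Ring.inverse ρ := by
  have hσu : IsUnit σ := CStarAlgebra.isUnit_of_le _ h (hu.isStrictlyPositive hρ)
  rw [← hu.unit_spec, ← hσu.unit_spec, Ring.inverse_unit, Ring.inverse_unit]
  exact CStarAlgebra.inv_le_inv (a := hu.unit) (b := hσu.unit) (by rwa [hu.unit_spec])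
    (by rw [hu.unit_spec, hσu.unit_spec]; exact h)

lemma isPositive_of_nonneg {ρ : E →L[ℂ] E} (h : 0 ≤ ρ) : ρ.IsPositive := by
  rw [← sub_zero ρ]; exact (ContinuousLinearMap.le_def 0 ρ).mp h

lemma conj_adjoint_nonneg (B : F →L[ℂ] E) {ρ : F →L[ℂ] F} (hρ : 0 ≤ ρ) :
    (0 : E →L[ℂ] E) ≤ B ∘L ρ ∘L ContinuousLinearMap.adjoint B := by
  rw [ContinuousLinearMap.le_def, sub_zero]
  exact (isPositive_of_nonneg hρ).conj_adjoint B

lemma conj_adjoint_mono (B : F →L[ℂ] E) {ρ σ : F →L[ℂ] F} (h : ρ ≤ σ) :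
    B ∘L ρ ∘L ContinuousLinearMap.adjoint B ≤ B ∘L σ ∘L ContinuousLinearMap.adjoint B := by
  rw [ContinuousLinearMap.le_def]
  have h' : (σ - ρ).IsPositive := (ContinuousLinearMap.le_def ρ σ).mp h
  have h2 := h'.conj_adjoint B
  have heq : B ∘L σ ∘L ContinuousLinearMap.adjoint B - B ∘L ρ ∘L ContinuousLinearMap.adjoint B
      = B ∘L (σ - ρ) ∘L ContinuousLinearMap.adjoint B := by
    ext x
    simp [ContinuousLinearMap.sub_apply, ContinuousLinearMap.comp_apply, map_sub]
  rwa [heq]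

lemma conj_adjoint_isSelfAdjoint (B : F →L[ℂ] E) {ρ : F →L[ℂ] F} (hρ : IsSelfAdjoint ρ) :
    IsSelfAdjoint (B ∘L ρ ∘L ContinuousLinearMap.adjoint B) :=
  hρ.conj_adjoint B

lemma inner_le_of_le {p q : E →L[ℂ] E} (h : p ≤ q) (x : E) :
    RCLike.re ⟪p x, x⟫ ≤ RCLike.re ⟪q x, x⟫ := by
  have h' := ((ContinuousLinearMap.le_def p q).mp h).2 x
  rw [ContinuousLinearMap.reApplyInnerSelf_apply] at h'
  simp only [ContinuousLinearMap.sub_apply, inner_sub_left, map_sub] at h'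
  linarith

lemma re_inner_smul_real (r : ℝ) (y x : E) :
    RCLike.re ⟪(r : ℝ) • y, x⟫ = r * RCLike.re ⟪y, x⟫ := by
  rw [RCLike.real_smul_eq_coe_smul (K := ℂ), inner_smul_left, RCLike.conj_ofReal,
    RCLike.re_ofReal_mul]

set_option synthInstance.maxHeartbeats 1000000 in
set_option maxHeartbeats 1000000 in
lemma norm_apply_sq_le {p : E →L[ℂ] E} (hp : 0 ≤ p) (x : E) :
    ‖p x‖ ^ 2 ≤ ‖p‖ * RCLike.re ⟪p x, x⟫ := by
  have hpsa : IsSelfAdjoint p := .of_nonneg hp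
  obtain ⟨a, ha⟩ : ∃ a : E →L[ℂ] E, CFC.sqrt p = a := ⟨_, rfl⟩
  have hss : a * a = p := by rw [← ha]; exact CFC.sqrt_mul_sqrt_self p hp
  have hsq : p * p ≤ ‖p‖ • p := by
    have h1 : p ≤ algebraMap ℝ (E →L[ℂ] E) ‖p‖ := IsSelfAdjoint.le_algebraMap_norm_self hpsa
    have hs : IsSelfAdjoint a := by rw [← ha]; exact .of_nonneg (CFC.sqrt_nonneg _)
    calc p * p = a * p * a := by rw [← hss]; noncomm_ring
      _ ≤ a * algebraMap ℝ (E →L[ℂ] E) ‖p‖ * a :=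
          hs.conjugate_le_conjugate h1
      _ = ‖p‖ • p := by
          rw [Algebra.algebraMap_eq_smul_one]
          rw [mul_smul_comm, smul_mul_assoc, mul_one, hss]
  have h3 := inner_le_of_le hsq x
  have hL : RCLike.re ⟪(p * p) x, x⟫ = ‖p x‖ ^ 2 := by
    have h4 : ⟪(p * p) x, x⟫ = ⟪p x, p x⟫ := by
      rw [ContinuousLinearMap.mul_apply]
      exact (ContinuousLinearMap.isSelfAdjoint_iff_isSymmetric.mp hpsa) (p x) x
    rw [h4, inner_self_eq_norm_sq]
  have hR : RCLike.re ⟪(‖p‖ • p) x, x⟫ = ‖p‖ * RCLike.re ⟪p x, x⟫ := by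
    rw [ContinuousLinearMap.smul_apply, re_inner_smul_real]
  rw [hL, hR] at h3
  exact h3

lemma monotone_convergence {f : ℕ → E →L[ℂ] E} (hmono : Monotone f)
    (hsa : ∀ n, IsSelfAdjoint (f n)) (b : E →L[ℂ] E) (hb : ∀ n, f n ≤ b) :
    ∃ slim : E →L[ℂ] E, IsSelfAdjoint slim ∧
      ∀ x, Tendsto (fun n => f n x) atTop (𝓝 (slim x)) := by
  set M := ‖b - f 0‖ with hMdef
  have hMnonneg : 0 ≤ M := norm_nonneg _
  have hM : ∀ {n m : ℕ}, n ≤ m → ‖f m - f n‖ ≤ M := by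
    intro n m h
    have h0 : 0 ≤ f m - f n := sub_nonneg.mpr (hmono h)
    have h1 : f m - f n ≤ b - f 0 := sub_le_sub (hb m) (hmono (Nat.zero_le n))
    exact CStarAlgebra.norm_le_norm_of_nonneg_of_le h0 h1
  have key : ∀ x : E, ∃ y, Tendsto (fun n => f n x) atTop (𝓝 y) := by
    intro x
    have hcauchy : CauchySeq (fun n => f n x) := by
      set g : ℕ → ℝ := fun n => RCLike.re ⟪f n x, x⟫ with hg
      have hgmono : Monotone g := fun n m h => inner_le_of_le (hmono h) x
      have hgbdd : BddAbove (Set.range g) := by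
        refine ⟨RCLike.re ⟪b x, x⟫, ?_⟩
        rintro _ ⟨n, rfl⟩
        exact inner_le_of_le (hb n) x
      have hgcs : CauchySeq g := (tendsto_atTop_ciSup hgmono hgbdd).cauchySeq
      rw [Metric.cauchySeq_iff] at hgcs ⊢
      intro ε hε
      obtain ⟨N, hN⟩ := hgcs (ε ^ 2 / (M + 1)) (by positivity)
      refine ⟨N, fun m hm n hn => ?_⟩
      wlog hmn : n ≤ m generalizing n m
      · rw [dist_comm]; exact this n hn m hm (le_of_not_ge hmn)
      have h0 : 0 ≤ f m - f n := sub_nonneg.mpr (hmono hmn)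
      have h2 : RCLike.re ⟪(f m - f n) x, x⟫ = g m - g n := by
        simp only [ContinuousLinearMap.sub_apply, inner_sub_left, map_sub, hg]
      have h3 : (0:ℝ) ≤ g m - g n := by
        rw [← h2]; exact (isPositive_of_nonneg h0).re_inner_nonneg_left x
      have hkey : ‖f m x - f n x‖ ^ 2 ≤ M * (g m - g n) := by
        have h1 := norm_apply_sq_le h0 x
        have h4 : ‖(f m - f n) x‖ ^ 2 ≤ M * (g m - g n) := by
          calc ‖(f m - f n) x‖ ^ 2 ≤ ‖f m - f n‖ * RCLike.re ⟪(f m - f n) x, x⟫ := h1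
            _ ≤ M * (g m - g n) := by rw [h2]; exact mul_le_mul_of_nonneg_right (hM hmn) h3
        simpa only [ContinuousLinearMap.sub_apply] using h4
      have hgdist : g m - g n < ε ^ 2 / (M + 1) := by
        have := hN m hm n hn
        rw [Real.dist_eq] at this
        exact lt_of_le_of_lt (le_abs_self _) this
      have hsq : dist (f m x) (f n x) ^ 2 < ε ^ 2 := by
        rw [dist_eq_norm]
        calc ‖f m x - f n x‖ ^ 2 ≤ M * (g m - g n) := hkey
          _ ≤ (M + 1) * (g m - g n) := mul_le_mul_of_nonneg_right (by linarith) h3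
          _ < (M + 1) * (ε ^ 2 / (M + 1)) :=
              mul_lt_mul_of_pos_left hgdist (by linarith)
          _ = ε ^ 2 := by field_simp
      exact lt_of_pow_lt_pow_left₀ 2 hε.le hsq
    exact cauchySeq_tendsto_of_complete hcauchy
  choose flim hflim using key
  have hptw : Tendsto (fun n x => f n x) atTop (𝓝 flim) := tendsto_pi_nhds.mpr hflim
  let slim : E →L[ℂ] E := continuousLinearMapOfTendsto f hptw
  have hslim : ∀ x, Tendsto (fun n => f n x) atTop (𝓝 (slim x)) := by
    intro x
    exact hflim x
  refine ⟨slim, ?_, hslim⟩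
  rw [ContinuousLinearMap.isSelfAdjoint_iff_isSymmetric]
  intro x y
  have h1 : Tendsto (fun n => ⟪f n x, y⟫) atTop (𝓝 ⟪slim x, y⟫) :=
    (hslim x).inner tendsto_const_nhds
  have h2 : Tendsto (fun n => ⟪x, f n y⟫) atTop (𝓝 ⟪x, slim y⟫) :=
    tendsto_const_nhds.inner (hslim y)
  have heq : (fun n => ⟪f n x, y⟫) = fun n => ⟪x, f n y⟫ :=
    funext fun n => (ContinuousLinearMap.isSelfAdjoint_iff_isSymmetric.mp (hsa n)) x y
  exact tendsto_nhds_unique (heq ▸ h1) h2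

end

end RiccatiAux

section DiagAux

open ContinuousLinearMap

noncomputable section

local notation "⟪" x ", " y "⟫" => @inner ℂ _ _ x y

variable {H : Type*} [NormedAddCommGroup H] [InnerProductSpace ℂ H] [CompleteSpace H]

lemma diagOp_adjoint (q : H →L[ℂ] H) :
    ContinuousLinearMap.adjoint (diagOp q) = diagOp (ContinuousLinearMap.adjoint q) := by
  symm
  rw [ContinuousLinearMap.eq_adjoint_iff]
  intro ξ η
  rw [lp.inner_eq_tsum, lp.inner_eq_tsum]
  exact tsum_congr fun k => by
    simp only [diagOp_apply]
    exact ContinuousLinearMap.adjoint_inner_left q (η k) (ξ k)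

lemma diagOp_sub (q r : H →L[ℂ] H) : diagOp (q - r) = diagOp q - diagOp r := by
  ext ξ k
  simp [lp.coeFn_sub, ContinuousLinearMap.sub_apply]

lemma diagOp_smul_one (δ : ℝ) :
    diagOp (δ • (1 : H →L[ℂ] H)) = δ • (1 : l2 H →L[ℂ] l2 H) := by
  ext ξ k
  simp [lp.coeFn_smul]

lemma diagOp_nonneg {q : H →L[ℂ] H} (hq : 0 ≤ q) : 0 ≤ diagOp q := by
  have hq' : q.IsPositive := isPositive_of_nonneg hq
  rw [ContinuousLinearMap.le_def, sub_zero]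
  constructor
  · rw [← ContinuousLinearMap.isSelfAdjoint_iff_isSymmetric, ContinuousLinearMap.isSelfAdjoint_iff', diagOp_adjoint, hq'.isSelfAdjoint.adjoint_eq]
  · intro ξ
    rw [ContinuousLinearMap.reApplyInnerSelf_apply, lp.inner_eq_tsum]
    have hsm := lp.summable_inner (𝕜 := ℂ) (diagOp q ξ) ξ
    rw [RCLike.re_tsum _ hsm]
    refine tsum_nonneg fun k => ?_
    simpa only [diagOp_apply] using hq'.re_inner_nonneg_left (ξ k)

lemma diagOp_mono {q r : H →L[ℂ] H} (h : q ≤ r) : diagOp q ≤ diagOp r := by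
  have := diagOp_nonneg (sub_nonneg.mpr h)
  rwa [diagOp_sub, sub_nonneg] at this

lemma diagOp_strong {δ : ℝ} {s : H →L[ℂ] H} (h : δ • (1 : H →L[ℂ] H) ≤ s) :
    δ • (1 : l2 H →L[ℂ] l2 H) ≤ diagOp s := by
  have h2 := diagOp_mono h
  rwa [diagOp_smul_one] at h2

variable (A11 : H →L[ℂ] H) (A12 : l2 H →L[ℂ] H) (A22 : l2 H →L[ℂ] l2 H)

lemma gap_sp {s : H →L[ℂ] H} (hgap : StronglyPositive (diagOp A11 - A22)) (hs : A11 ≤ s) :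
    StronglyPositive (diagOp s - A22) := by
  obtain ⟨δ, hδ, hle⟩ := hgap
  refine ⟨δ, hδ, hle.trans ?_⟩
  exact sub_le_sub_right (diagOp_mono hs) A22

lemma riccatiMap_ge (hgap : StronglyPositive (diagOp A11 - A22))
    {s : H →L[ℂ] H} (hs : A11 ≤ s) : A11 ≤ riccatiMap A11 A12 A22 s := by
  have hsp := gap_sp A11 A22 hgap hs
  have hu : IsUnit (diagOp s - A22) := StronglyPositive.isUnit' hsp
  have hinv : 0 ≤ Ring.inverse (diagOp s - A22) :=
    ringInverse_nonneg hu (StronglyPositive.nonneg' hsp)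
  exact le_add_of_nonneg_right (conj_adjoint_nonneg A12 hinv)

lemma riccatiMap_sa (hA11sa : IsSelfAdjoint A11)
    (hgap : StronglyPositive (diagOp A11 - A22))
    {s : H →L[ℂ] H} (hs : A11 ≤ s) : IsSelfAdjoint (riccatiMap A11 A12 A22 s) := by
  have hsp := gap_sp A11 A22 hgap hs
  have hu : IsUnit (diagOp s - A22) := StronglyPositive.isUnit' hsp
  have hinv : 0 ≤ Ring.inverse (diagOp s - A22) :=
    ringInverse_nonneg hu (StronglyPositive.nonneg' hsp)
  exact hA11sa.add (conj_adjoint_isSelfAdjoint A12 (.of_nonneg hinv))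

lemma riccatiMap_antitone (hgap : StronglyPositive (diagOp A11 - A22))
    {s t : H →L[ℂ] H} (hs : A11 ≤ s) (hst : s ≤ t) :
    riccatiMap A11 A12 A22 t ≤ riccatiMap A11 A12 A22 s := by
  have hsp := gap_sp A11 A22 hgap hs
  have hu : IsUnit (diagOp s - A22) := StronglyPositive.isUnit' hsp
  have hdle : diagOp s - A22 ≤ diagOp t - A22 := sub_le_sub_right (diagOp_mono hst) A22
  have hinvle := ringInverse_antitone (StronglyPositive.nonneg' hsp) hu hdle
  exact add_le_add_right (conj_adjoint_mono A12 hinvle) A11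

end

end DiagAux

/-- **Lemma 2.2 (part 1).**  The even successive approximations `s₀, s₂, s₄, …` increase
monotonically in the Loewner order and converge strongly to a selfadjoint operator. -/
theorem riccati_even_iterates_monotone_and_strongly_convergent
    {H : Type*} [NormedAddCommGroup H] [InnerProductSpace ℂ H] [CompleteSpace H]
    [TopologicalSpace.SeparableSpace H]
    (A11 : H →L[ℂ] H) (A12 : l2 H →L[ℂ] H) (A22 : l2 H →L[ℂ] l2 H)
    (hA11sa : IsSelfAdjoint A11) (hA22sa : IsSelfAdjoint A22)
    (hgap : StronglyPositive (diagOp A11 - A22)) :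
    Monotone (fun n => riccatiSeq A11 A12 A22 (2 * n)) ∧
      ∃ slim : H →L[ℂ] H, IsSelfAdjoint slim ∧
        ∀ x : H, Filter.Tendsto (fun n => riccatiSeq A11 A12 A22 (2 * n) x)
          Filter.atTop (𝓝 (slim x)) := by
  have hS0 : riccatiSeq A11 A12 A22 0 = A11 := rfl
  have hSsucc : ∀ n, riccatiSeq A11 A12 A22 (n + 1)
      = riccatiMap A11 A12 A22 (riccatiSeq A11 A12 A22 n) := fun n => rfl
  set S := riccatiSeq A11 A12 A22 with hS
  have hbasic : ∀ n, IsSelfAdjoint (S n) ∧ A11 ≤ S n := by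
    intro n
    induction n with
    | zero => exact ⟨hA11sa, le_refl _⟩
    | succ n ih =>
      rw [hSsucc]
      exact ⟨riccatiMap_sa A11 A12 A22 hA11sa hgap ih.2,
        riccatiMap_ge A11 A12 A22 hgap ih.2⟩
  have hub : ∀ n, S n ≤ S 1 := by
    intro n
    cases n with
    | zero => exact hS0 ▸ (hbasic 1).2
    | succ n =>
      have hS1 : S 1 = riccatiMap A11 A12 A22 A11 := by rw [show (1:ℕ) = 0 + 1 from rfl, hSsucc 0, hS0]
      rw [hSsucc, hS1]
      exact riccatiMap_antitone A11 A12 A22 hgap (le_refl A11) (hbasic n).2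
  have heven : ∀ n, S (2 * n) ≤ S (2 * n + 2) := by
    intro n
    induction n with
    | zero => simpa [hS0] using (hbasic 2).2
    | succ n ih =>
      have h1 : S (2 * n + 3) ≤ S (2 * n + 1) := by
        have := riccatiMap_antitone A11 A12 A22 hgap (hbasic (2 * n)).2 ih
        rw [← hSsucc, ← hSsucc] at this
        exact this
      have h2 : S (2 * n + 2) ≤ S (2 * n + 4) := by
        have := riccatiMap_antitone A11 A12 A22 hgap (hbasic (2 * n + 3)).2 h1
        rw [← hSsucc, ← hSsucc] at this
        exact this
      have e1 : 2 * (n + 1) = 2 * n + 2 := by ring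
      rw [e1, show 2 * n + 2 + 2 = 2 * n + 4 from by omega]
      exact h2
  have hmono : Monotone (fun n => S (2 * n)) := by
    apply monotone_nat_of_le_succ
    intro n
    have e1 : 2 * (n + 1) = 2 * n + 2 := by ring
    rw [e1]
    exact heven n
  refine ⟨hmono, ?_⟩
  obtain ⟨slim, hslim_sa, hslim⟩ := monotone_convergence hmono
    (fun n => (hbasic (2 * n)).1) (S 1) (fun n => hub (2 * n))
  exact ⟨slim, hslim_sa, hslim⟩
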